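/- Let I, I' be comparable sets of nodes and ℓ' = max(|I|, |I'|) - |I ∩ I'|. If p ∈ I ∩ I', then I'_#(p) - ℓ' ≤ I_#(p) ≤ I'_#(p) + ℓ'. -/

import Mathlib

/-- `time_p >_I time_q`. -/
def gtI {Node : Type*} {Label : Node → Type*} [∀ i, LinearOrder (Label i)]
    (time : Node → ∀ i, Label i) (I : Finset Node) (p q : Node) : Prop :=
  (∀ i ∈ I, time q i ≤ time p i) ∧ time p q = time q q ∧ time q p < time p p

/-- A set `I` of nodes is comparable. -/
def ComparableSet {Node : Type*} {Label : Node → Type*} [∀ i, LinearOrder (Label i)]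
    (time : Node → ∀ i, Label i) (I : Finset Node) : Prop :=
  ∀ p ∈ I, ∀ q ∈ I, p ≠ q → gtI time I p q ∨ gtI time I q p

/-- Rank of `p` in `I`. -/
noncomputable def rankIn {Node : Type*} {Label : Node → Type*} [∀ i, LinearOrder (Label i)]
    (time : Node → ∀ i, Label i) (I : Finset Node) (p : Node) : ℕ :=
  {q | q ∈ I ∧ gtI time I q p}.ncard + 1

open Classical in
lemma rankIn_eq_filter {Node : Type*} {Label : Node → Type*} [∀ i, LinearOrder (Label i)]
    (time : Node → ∀ i, Label i) (I : Finset Node) (p : Node) :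
    rankIn time I p = (I.filter (fun q => gtI time I q p)).card + 1 := by
  unfold rankIn
  congr 1
  rw [← Set.ncard_coe_finset]
  congr 1
  ext q
  simp [Finset.mem_filter]

lemma gtI_agree {Node : Type*} {Label : Node → Type*} [∀ i, LinearOrder (Label i)]
    {time : Node → ∀ i, Label i} {I I' : Finset Node}
    (hI' : ComparableSet time I') {p q : Node}
    (hpI' : p ∈ I') (hqI' : q ∈ I')
    (h : gtI time I q p) : gtI time I' q p := by
  by_cases hqp : q = p
  · exact absurd h.2.2 (by simp [hqp])
  · rcases hI' q hqI' p hpI' hqp with h' | h'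
    · exact h'
    · exact absurd (h.2.1 ▸ h'.2.2) (lt_irrefl _)

open Classical in
lemma key {Node : Type*} [DecidableEq Node] {Label : Node → Type*}
    [∀ i, LinearOrder (Label i)]
    (time : Node → ∀ i, Label i) (I I' : Finset Node)
    (hI' : ComparableSet time I')
    (p : Node) (hp : p ∈ I ∩ I') :
    rankIn time I p ≤ rankIn time I' p + (max I.card I'.card - (I ∩ I').card) := by
  rw [rankIn_eq_filter, rankIn_eq_filter]
  set A := I.filter (fun q => gtI time I q p) with hA
  set B := I'.filter (fun q => gtI time I' q p) with hB
  have hsub : A ∩ I' ⊆ B := by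
    intro q hq
    simp only [hA, hB, Finset.mem_inter, Finset.mem_filter] at hq ⊢
    exact ⟨hq.2, gtI_agree hI' (Finset.mem_inter.mp hp).2 hq.2 hq.1.2⟩
  have h1 : A.card ≤ (A ∩ I').card + (A \ I').card := le_of_eq
    (Finset.card_inter_add_card_sdiff A I').symm
  have h2 : (A \ I').card ≤ (I \ I').card :=
    Finset.card_le_card (Finset.sdiff_subset_sdiff (Finset.filter_subset _ _) le_rfl)
  have h3 : (I \ I').card = I.card - (I ∩ I').card := by
    have := Finset.card_sdiff_add_card_inter I I'
    omega
  have h4 : I.card - (I ∩ I').card ≤ max I.card I'.card - (I ∩ I').card :=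
    Nat.sub_le_sub_right (le_max_left _ _) _
  have h5 : (A ∩ I').card ≤ B.card := Finset.card_le_card hsub
  omega

theorem stmt6 {Node : Type*} [DecidableEq Node] {Label : Node → Type*}
    [∀ i, LinearOrder (Label i)]
    (time : Node → ∀ i, Label i) (I I' : Finset Node)
    (hI : ComparableSet time I) (hI' : ComparableSet time I')
    (p : Node) (hp : p ∈ I ∩ I') :
    rankIn time I' p - (max I.card I'.card - (I ∩ I').card) ≤ rankIn time I p ∧
      rankIn time I p ≤ rankIn time I' p + (max I.card I'.card - (I ∩ I').card) := by
  have h1 := key time I I' hI' p hp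
  have h2 := key time I' I hI p (by rwa [Finset.inter_comm])
  rw [Finset.inter_comm, max_comm] at h2
  exact ⟨by omega, h1⟩
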